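/- Let V be a unitary on the joint ancilla-system space such that V|0^a⟩|ψ⟩ = sin(α)|0^a⟩W|ψ⟩ + cos(α)|⊥_ψ⟩ for all system states |ψ⟩, where W is unitary and (⟨0^a|⊗I)|⊥_ψ⟩ = 0, and suppose sin(α) = sin(π/(2(2t+1))) for a nonnegative integer t. Then with R = 2|0^a⟩⟨0^a| ⊗ I − I and A = −V R V† R, one has A^t V |0^a⟩|ψ⟩ = |0^a⟩W|ψ⟩ exactly. -/

import Mathlib

open Matrix

/-- The reflection `R = 2|0^a⟩⟨0^a| ⊗ I − I` on the joint ancilla–system space. -/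
def Rrefl (a n : ℕ) : Matrix (Fin (2^a) × Fin (2^n)) (Fin (2^a) × Fin (2^n)) ℂ :=
  fun p q => if p = q then (if (p.1 : ℕ) = 0 then 1 else -1) else 0

/-- The state `|0^a⟩|ψ⟩` on the joint ancilla–system space. -/
def joinZero (a n : ℕ) (ψ : Fin (2^n) → ℂ) : Fin (2^a) × Fin (2^n) → ℂ :=
  fun p => (if (p.1 : ℕ) = 0 then 1 else 0) * ψ p.2

/-- The amplitude recursion for oblivious amplitude amplification. -/
def ampP (s : ℝ) : ℕ → ℝ × ℝ
  | 0 => (s, 1)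
  | k+1 => ((1 - 2*s^2) * (ampP s k).1 + 2*s*(1-s^2)*(ampP s k).2,
            -(2*s)*(ampP s k).1 + (1 - 2*s^2)*(ampP s k).2)

lemma ampP_spec (x : ℝ) : ∀ k : ℕ,
    (ampP (Real.sin x) k).1 = Real.sin ((2*k+1)*x) ∧
    Real.cos x * (ampP (Real.sin x) k).2 = Real.cos ((2*k+1)*x) := by
  intro k
  induction k with
  | zero => constructor <;> simp [ampP]
  | succ k ih =>
    obtain ⟨ih1, ih2⟩ := ih
    have hxx : Real.sin x ^ 2 + Real.cos x ^ 2 = 1 := Real.sin_sq_add_cos_sq x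
    have h1 : ((2*((k:ℝ)+1)+1))*x = (2*k+1)*x + 2*x := by ring
    constructor
    · simp only [ampP]
      push_cast
      rw [h1, Real.sin_add, Real.sin_two_mul, Real.cos_two_mul]
      linear_combination (1 - 2*Real.sin x^2) * ih1 + (2*Real.sin x*Real.cos x) * ih2 +
        (-2*Real.sin x*(ampP (Real.sin x) k).2 - 2*Real.sin ((2*(k:ℝ)+1)*x)) * hxx
    · simp only [ampP]
      push_cast
      rw [h1, Real.cos_add, Real.sin_two_mul, Real.cos_two_mul]
      linear_combination (-(2*Real.sin x*Real.cos x)) * ih1 + (2*Real.cos x^2 - 1) * ih2 +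
        (-2*Real.cos x*(ampP (Real.sin x) k).2) * hxx

lemma Rrefl_mulVec (a n : ℕ) (v : Fin (2^a) × Fin (2^n) → ℂ) :
    Rrefl a n *ᵥ v = fun p => (if (p.1 : ℕ) = 0 then v p else -v p) := by
  funext p
  simp only [Rrefl, mulVec, dotProduct, ite_mul, one_mul, neg_mul, zero_mul]
  rw [Finset.sum_ite_eq (Finset.univ) p (fun q => if (p.1:ℕ) = 0 then v q else -v q)]
  simp

lemma Rrefl_mulVec_self (a n : ℕ) (v : Fin (2^a) × Fin (2^n) → ℂ)
    (h : ∀ p : Fin (2^a) × Fin (2^n), (p.1 : ℕ) ≠ 0 → v p = 0) :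
    Rrefl a n *ᵥ v = v := by
  rw [Rrefl_mulVec]; funext p
  by_cases hp : (p.1 : ℕ) = 0 <;> simp [hp, h p]

lemma Rrefl_mulVec_neg (a n : ℕ) (v : Fin (2^a) × Fin (2^n) → ℂ)
    (h : ∀ p : Fin (2^a) × Fin (2^n), (p.1 : ℕ) = 0 → v p = 0) :
    Rrefl a n *ᵥ v = -v := by
  rw [Rrefl_mulVec]; funext p
  by_cases hp : (p.1 : ℕ) = 0 <;> simp [hp, h p]

theorem oblivious_amplitude_amplification (a n t : ℕ) (α : ℝ)
    (V : Matrix (Fin (2^a) × Fin (2^n)) (Fin (2^a) × Fin (2^n)) ℂ)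
    (hV : V ∈ Matrix.unitaryGroup (Fin (2^a) × Fin (2^n)) ℂ)
    (W : Matrix (Fin (2^n)) (Fin (2^n)) ℂ)
    (hW : W ∈ Matrix.unitaryGroup (Fin (2^n)) ℂ)
    (hα : Real.sin α = Real.sin (Real.pi / (2 * (2 * (t : ℝ) + 1))))
    (hact : ∀ ψ : Fin (2^n) → ℂ, ∃ perp : Fin (2^a) × Fin (2^n) → ℂ,
      (∀ j : Fin (2^n), perp (⟨0, Nat.two_pow_pos a⟩, j) = 0) ∧
      V *ᵥ joinZero a n ψ =
        ((Real.sin α : ℝ) : ℂ) • joinZero a n (W *ᵥ ψ) +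
        ((Real.cos α : ℝ) : ℂ) • perp) :
    ∀ ψ : Fin (2^n) → ℂ,
      ((-(V * Rrefl a n * Vᴴ * Rrefl a n)) ^ t) *ᵥ (V *ᵥ joinZero a n ψ) =
        joinZero a n (W *ᵥ ψ) := by
  intro ψ
  have hV1 : Vᴴ * V = 1 := by
    rw [← Matrix.star_eq_conjTranspose]; exact mem_unitaryGroup_iff'.mp hV
  have hV2 : V * Vᴴ = 1 := by
    rw [← Matrix.star_eq_conjTranspose]; exact mem_unitaryGroup_iff.mp hV
  have hW1 : Wᴴ * W = 1 := by
    rw [← Matrix.star_eq_conjTranspose]; exact mem_unitaryGroup_iff'.mp hW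
  set z : Fin (2^a) := ⟨0, Nat.two_pow_pos a⟩ with hzdef
  have hzv : (z : ℕ) = 0 := rfl
  have hz0 : z = 0 := Fin.ext (by simp [hzv])
  set s : ℝ := Real.sin α with hsdef
  -- the key entry fact
  have key : ∀ j m : Fin (2^n), V (z, j) (z, m) = (s : ℂ) * W j m := by
    intro j m
    obtain ⟨pp, hpp0, heq⟩ := hact (Pi.single m 1)
    have hj : joinZero a n (Pi.single m 1) = Pi.single ((z : Fin (2^a)), m) 1 := by
      funext p
      simp only [joinZero, Pi.single_apply, Prod.ext_iff, Fin.ext_iff]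
      by_cases h1 : (p.1 : ℕ) = 0 <;> by_cases h2 : p.2 = m <;> simp [h1, h2, hzv, hz0]
    rw [hj, mulVec_single] at heq
    have h1 := congrFun heq (z, j)
    simpa [joinZero, mulVec_single, hpp0 j, hz0, (by rw [← hz0]; exact hpp0 j : pp (0, j) = 0)] using h1
  obtain ⟨perp, hperp, hvu0⟩ := hact ψ
  set u : Fin (2^a) × Fin (2^n) → ℂ := joinZero a n ψ with hudef
  set g : Fin (2^a) × Fin (2^n) → ℂ := joinZero a n (W *ᵥ ψ) with hgdef
  set b : Fin (2^a) × Fin (2^n) → ℂ := ((Real.cos α : ℝ) : ℂ) • perp with hbdef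
  have hvu : V *ᵥ u = (s : ℂ) • g + b := hvu0
  set d : Fin (2^a) × Fin (2^n) → ℂ := Vᴴ *ᵥ g - (s : ℂ) • u with hddef
  have hdz : ∀ j : Fin (2^n), d (z, j) = 0 := by
    intro j
    have hcalc : (Vᴴ *ᵥ g) (z, j) = (s : ℂ) * ψ j := by
      calc (Vᴴ *ᵥ g) (z, j)
          = ∑ q : Fin (2^a) × Fin (2^n),
              (starRingEnd ℂ) (V q (z, j)) * joinZero a n (W *ᵥ ψ) q := by
            simp [hgdef, mulVec, dotProduct, conjTranspose_apply]
        _ = ∑ q1 : Fin (2^a), ∑ q2 : Fin (2^n),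
              (starRingEnd ℂ) (V (q1, q2) (z, j)) *
                ((if (q1 : ℕ) = 0 then 1 else 0) * (W *ᵥ ψ) q2) := by
            rw [Fintype.sum_prod_type]; rfl
        _ = ∑ q2 : Fin (2^n), (starRingEnd ℂ) (V (z, q2) (z, j)) * (W *ᵥ ψ) q2 := by
            rw [Finset.sum_eq_single z]
            · simp [hzv]
            · intro q1 _ hq1
              have : (q1 : ℕ) ≠ 0 := by
                intro h; exact hq1 (Fin.ext (h.trans hzv.symm))
              simp [this]
            · simp
        _ = (s : ℂ) * ∑ q2 : Fin (2^n), (starRingEnd ℂ) (W q2 j) * (W *ᵥ ψ) q2 := by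
            rw [Finset.mul_sum]
            refine Finset.sum_congr rfl fun q2 _ => ?_
            rw [key q2 j]
            simp [mul_assoc]
        _ = (s : ℂ) * ((Wᴴ * W) *ᵥ ψ) j := by
            rw [← mulVec_mulVec]
            simp [mulVec, dotProduct, conjTranspose_apply]
        _ = (s : ℂ) * ψ j := by rw [hW1]; simp
    have huz : u (z, j) = ψ j := by simp [hudef, joinZero, hz0]
    simp [hddef, hcalc, huz]
  -- reflection actions
  have hRu : Rrefl a n *ᵥ u = u :=
    Rrefl_mulVec_self a n u (fun p hp => by simp [hudef, joinZero, hp])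
  have hRg : Rrefl a n *ᵥ g = g :=
    Rrefl_mulVec_self a n g (fun p hp => by simp [hgdef, joinZero, hp])
  have hRb : Rrefl a n *ᵥ b = -b := by
    refine Rrefl_mulVec_neg a n b (fun p hp => ?_)
    have hp1 : p = (z, p.2) := Prod.ext (Fin.ext hp) rfl
    rw [hp1]
    simp [hbdef, hperp p.2]
  have hRd : Rrefl a n *ᵥ d = -d := by
    refine Rrefl_mulVec_neg a n d (fun p hp => ?_)
    have hp1 : p = (z, p.2) := Prod.ext (Fin.ext hp) rfl
    rw [hp1]
    exact hdz p.2
  -- algebraic relations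
  have hVHg : Vᴴ *ᵥ g = (s : ℂ) • u + d := by rw [hddef]; module
  have hb' : b = V *ᵥ u - (s : ℂ) • g := by rw [hvu]; module
  have hVHb : Vᴴ *ᵥ b = (1 - (s : ℂ)^2) • u - (s : ℂ) • d := by
    have h2 : Vᴴ *ᵥ (V *ᵥ u) = u := by rw [mulVec_mulVec, hV1, one_mulVec]
    rw [hb', mulVec_sub, mulVec_smul, h2, hVHg]
    module
  have hVd : V *ᵥ d = (1 - (s : ℂ)^2) • g - (s : ℂ) • b := by
    have h2 : V *ᵥ (Vᴴ *ᵥ g) = g := by rw [mulVec_mulVec, hV2, one_mulVec]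
    rw [hddef, mulVec_sub, mulVec_smul, h2, hvu]
    module
  -- action of A on the invariant plane
  have hAg : (-(V * Rrefl a n * Vᴴ * Rrefl a n)) *ᵥ g
      = (1 - 2*(s : ℂ)^2) • g - (2*(s : ℂ)) • b := by
    rw [neg_mulVec, ← mulVec_mulVec, ← mulVec_mulVec, ← mulVec_mulVec, hRg, hVHg]
    simp only [mulVec_add, mulVec_sub, mulVec_smul, mulVec_neg, hRu, hRd, hvu, hVd]
    module
  have hAb : (-(V * Rrefl a n * Vᴴ * Rrefl a n)) *ᵥ b
      = (2*(s : ℂ)*(1 - (s : ℂ)^2)) • g + (1 - 2*(s : ℂ)^2) • b := by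
    rw [neg_mulVec, ← mulVec_mulVec, ← mulVec_mulVec, ← mulVec_mulVec, hRb]
    simp only [mulVec_add, mulVec_sub, mulVec_smul, mulVec_neg, hRu, hRd, hvu, hVd, hVHb]
    module
  -- main induction
  have main : ∀ k : ℕ, ((-(V * Rrefl a n * Vᴴ * Rrefl a n)) ^ k) *ᵥ (V *ᵥ u)
      = (((ampP s k).1 : ℝ) : ℂ) • g + (((ampP s k).2 : ℝ) : ℂ) • b := by
    intro k
    induction k with
    | zero => simp [ampP, hvu]
    | succ k ih =>
      rw [pow_succ', ← mulVec_mulVec, ih, mulVec_add, mulVec_smul, mulVec_smul, hAg, hAb]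
      simp only [ampP]
      push_cast
      module
  -- final evaluation of the amplitudes
  set θ : ℝ := Real.pi / (2 * (2 * (t : ℝ) + 1)) with hθdef
  have htne : (2 * (t : ℝ) + 1) ≠ 0 := by positivity
  have hθ2 : (2 * (t : ℝ) + 1) * θ = Real.pi / 2 := by
    rw [hθdef]; field_simp
  have hspec := ampP_spec θ t
  have hspecα := ampP_spec α t
  have hsθ : s = Real.sin θ := hα
  have hp1 : (ampP s t).1 = 1 := by
    rw [hsθ, hspec.1, hθ2, Real.sin_pi_div_two]
  have hsin1 : Real.sin ((2*(t:ℝ)+1)*α) = 1 := by rw [← hspecα.1, ← hsdef, hp1]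
  have hcos0 : Real.cos ((2*(t:ℝ)+1)*α) = 0 := by
    have h := Real.sin_sq_add_cos_sq ((2*(t:ℝ)+1)*α)
    rw [hsin1] at h
    have : Real.cos ((2*(t:ℝ)+1)*α) ^ 2 = 0 := by linarith
    exact pow_eq_zero_iff (by norm_num) |>.mp this
  have hq0 : Real.cos α * (ampP s t).2 = 0 := by
    rw [hsdef, hspecα.2]; exact hcos0
  rw [main t, hp1]
  rw [hbdef]
  have : (((ampP s t).2 : ℝ) : ℂ) • (((Real.cos α : ℝ) : ℂ) • perp)
      = (((Real.cos α * (ampP s t).2 : ℝ) : ℂ)) • perp := by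
    rw [smul_smul, ← Complex.ofReal_mul, mul_comm]
  rw [this, hq0]
  simp [hgdef]
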